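/- Let m(s) = f(x) + sᵀ∇f(x) + (1/2)sᵀHs + (σ/3)‖s‖³ where ‖H‖ ≤ L. If ‖s‖ < 1 and ‖∇m(s)‖ ≤ κ‖∇f(x)‖ with 0 < κ < 1, then ‖s‖ ≥ (1-κ)‖∇f(x)‖/(L+σ). -/

import Mathlib

open RealInnerProductSpace

theorem stmt_5 (d : ℕ) (f : EuclideanSpace ℝ (Fin d) → ℝ)
    (x s : EuclideanSpace ℝ (Fin d))
    (H : EuclideanSpace ℝ (Fin d) →L[ℝ] EuclideanSpace ℝ (Fin d))
    (hsym : ∀ u v, ⟪H u, v⟫ = ⟪u, H v⟫)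
    (L σ κ : ℝ) (hL : 0 < L) (hσ : 0 < σ) (hκ0 : 0 < κ) (hκ1 : κ < 1)
    (hH : ‖H‖ ≤ L) (hs : ‖s‖ < 1)
    (happrox : ‖gradient f x + H s + (σ * ‖s‖) • s‖ ≤ κ * ‖gradient f x‖) :
    ‖s‖ ≥ (1 - κ) * ‖gradient f x‖ / (L + σ) := by
  set g := gradient f x with hg
  have hns : (0:ℝ) ≤ ‖s‖ := norm_nonneg s
  have h1 : ‖g‖ ≤ ‖g + H s + (σ * ‖s‖) • s‖ + ‖H s‖ + σ * ‖s‖ * ‖s‖ := by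
    have : g = (g + H s + (σ * ‖s‖) • s) - H s - (σ * ‖s‖) • s := by abel
    calc ‖g‖ = ‖(g + H s + (σ * ‖s‖) • s) - H s - (σ * ‖s‖) • s‖ := by rw [← this]
      _ ≤ ‖(g + H s + (σ * ‖s‖) • s) - H s‖ + ‖(σ * ‖s‖) • s‖ := norm_sub_le _ _
      _ ≤ ‖g + H s + (σ * ‖s‖) • s‖ + ‖H s‖ + ‖(σ * ‖s‖) • s‖ := add_le_add (norm_sub_le _ _) le_rfl
      _ = ‖g + H s + (σ * ‖s‖) • s‖ + ‖H s‖ + σ * ‖s‖ * ‖s‖ := by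
          rw [norm_smul, Real.norm_of_nonneg (by positivity)]
  have hHs : ‖H s‖ ≤ L * ‖s‖ :=
    (H.le_opNorm s).trans (mul_le_mul_of_nonneg_right hH hns)
  have hσs : σ * ‖s‖ * ‖s‖ ≤ σ * ‖s‖ := by nlinarith [mul_nonneg hσ.le hns]
  have h2 : (1 - κ) * ‖g‖ ≤ (L + σ) * ‖s‖ := by nlinarith
  rw [ge_iff_le, div_le_iff₀ (by linarith)]
  linarith
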